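/- Let f : ℂ^N → ℝ be differentiable (over ℝ) with L-Lipschitz gradient ∇f for some L > 0, let h : ℂ^N → ℝ be convex and differentiable, and set F = h + f. Let C ⊆ ℂ^N be a nonempty closed convex set, and suppose F* := inf_{x ∈ C} F(x) is finite. Let η > 0, and let a sequence x₁, x₂, … in C be generated as follows: for each k, B_k ∈ ℂ^{N×N} is Hermitian with η·I_N ⪯ B_k, the stepsize satisfies 0 < α_k ≤ η/L, and x_{k+1} is a minimizer over C of x̄ ↦ S_h(x̄, x_k, ∇f(x_k), B_k, α_k). Then for every K ≥ 1, min_{1 ≤ k ≤ K} ‖x_{k+1} − x_k‖² ≤ 2·(F(x₁) − F*)/(L·K). -/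

import Mathlib

open scoped ComplexOrder

noncomputable section

/-- `ℂ^N` with the standard complex inner product (conjugate-linear in the
first argument) and the induced norm. -/
abbrev EC (N : ℕ) := EuclideanSpace ℂ (Fin N)

/-- Weighted squared norm `‖z‖_W² = zᴴ W z` (its real part, which is the full
value when `W` is Hermitian). -/
def wnorm2 {N : ℕ} (W : Matrix (Fin N) (Fin N) ℂ) (z : EC N) : ℝ :=
  (dotProduct (fun i => starRingEnd ℂ (z i)) (W.mulVec (fun i => z i))).re

/-- Surrogate `S_h(x̄, x, g, W, α) = Re⟨g, x̄ − x⟩ + (1/(2α))‖x̄ − x‖_W² + h(x̄) − h(x)`. -/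
def Sh {N : ℕ} (h : EC N → ℝ) (W : Matrix (Fin N) (Fin N) ℂ) (α : ℝ)
    (g x xb : EC N) : ℝ :=
  (inner ℂ g (xb - x) : ℂ).re + (1 / (2 * α)) * wnorm2 W (xb - x) + h xb - h x

/-- `D_h^C(x, g, W, α) = −(2/α)·inf_{x̄ ∈ C} S_h(x̄, x, g, W, α)`. -/
def Dh {N : ℕ} (h : EC N → ℝ) (C : Set (EC N)) (W : Matrix (Fin N) (Fin N) ℂ)
    (α : ℝ) (g x : EC N) : ℝ :=
  -(2 / α) * sInf ((fun xb => Sh h W α g x xb) '' C)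

/-- The real-linear continuous functional `d ↦ Re⟨g, d⟩`, used to say that a
real-differentiable `f : ℂ^N → ℝ` has gradient `g` at a point. -/
def gradDual {N : ℕ} (g : EC N) : EC N →L[ℝ] ℝ :=
  Complex.reCLM.comp ((innerSL ℂ g).restrictScalars ℝ)

/-- The rank-one matrix `u·uᴴ` with entries `uᵢ · conj(uⱼ)`. -/
def rankOne {N : ℕ} (u : EC N) : Matrix (Fin N) (Fin N) ℂ :=
  Matrix.vecMulVec (fun i => u i) (fun i => starRingEnd ℂ (u i))

end

theorem wnorm2_lb' {N : ℕ} (W : Matrix (Fin N) (Fin N) ℂ) (η : ℝ)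
    (hW : (W - η • (1 : Matrix (Fin N) (Fin N) ℂ)).PosSemidef) (z : EC N) :
    η * ‖z‖ ^ 2 ≤ wnorm2 W z := by
  have h0 := hW.dotProduct_mulVec_nonneg (fun i => z i)
  have hz : dotProduct (star fun i => z i) z = ((‖z‖ ^ 2 : ℝ) : ℂ) := by
    have h1 : dotProduct (star fun i => z i) z = (inner ℂ z z : ℂ) := by
      simp [dotProduct, inner, Pi.star_apply, mul_comm]
    rw [h1, inner_self_eq_norm_sq_to_K]
    norm_cast
  have hexp : dotProduct (star fun i => z i)
      ((W - η • (1 : Matrix (Fin N) (Fin N) ℂ)).mulVec fun i => z i)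
      = dotProduct (star fun i => z i) (W.mulVec fun i => z i)
        - ((η * ‖z‖ ^ 2 : ℝ) : ℂ) := by
    rw [Matrix.sub_mulVec, dotProduct_sub, Matrix.smul_mulVec,
      Matrix.one_mulVec, dotProduct_smul, hz, Complex.real_smul]
    push_cast
    ring
  rw [hexp] at h0
  have h0re : (0:ℝ) ≤ (dotProduct (star fun i => z i) (W.mulVec fun i => z i)).re
      - η * ‖z‖ ^ 2 := by
    have h2 := (Complex.le_def.mp h0).1
    rw [Complex.zero_re, Complex.sub_re, Complex.ofReal_re] at h2
    linarith
  have h3 : (star fun i => z i) = fun i => starRingEnd ℂ (z i) := by funext i; rfl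
  rw [h3] at h0re
  unfold wnorm2
  linarith

theorem descent' {N : ℕ} (f : EC N → ℝ) (gradf : EC N → EC N) (L : ℝ)
    (hfdiff : ∀ z : EC N, HasFDerivAt f (gradDual (gradf z)) z)
    (hlip : ∀ z₁ z₂ : EC N, ‖gradf z₁ - gradf z₂‖ ≤ L * ‖z₁ - z₂‖)
    (x y : EC N) :
    f y ≤ f x + (inner ℂ (gradf x) (y - x) : ℂ).re + L / 2 * ‖y - x‖ ^ 2 := by
  set d := y - x with hd
  set c : ℝ := (inner ℂ (gradf x) d : ℂ).re with hc
  set q : ℝ := ‖d‖ ^ 2 with hq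
  have hg : ∀ t : ℝ, HasDerivAt (fun t : ℝ => f (x + t • d))
      ((inner ℂ (gradf (x + t • d)) d : ℂ).re) t := by
    intro t
    have hcurve : HasDerivAt (fun t : ℝ => x + t • d) d t := by
      simpa using ((hasDerivAt_id t).smul_const d).const_add x
    have := (hfdiff (x + t • d)).comp_hasDerivAt t hcurve
    simp [gradDual] at this; exact this
  set φ : ℝ → ℝ := fun t => f (x + t • d) - t * c - L / 2 * t ^ 2 * q with hφdef
  have hφ : ∀ t : ℝ, HasDerivAt φ
      ((inner ℂ (gradf (x + t • d)) d : ℂ).re - c - L * t * q) t := by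
    intro t
    have h1 : HasDerivAt (fun t : ℝ => t * c) c t := hasDerivAt_mul_const c
    have h2 : HasDerivAt (fun t : ℝ => L / 2 * t ^ 2 * q)
        (L / 2 * (2 * t ^ 1) * q) t :=
      (((hasDerivAt_pow 2 t).const_mul (L / 2)).mul_const q)
    have := ((hg t).sub h1).sub h2
    refine this.congr_deriv ?_
    ring
  have hder : ∀ t ∈ interior (Set.Icc (0:ℝ) 1), deriv φ t ≤ 0 := by
    intro t ht
    rw [interior_Icc] at ht
    rw [(hφ t).deriv]
    have hb : (inner ℂ (gradf (x + t • d)) d : ℂ).re - c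
        = (inner ℂ (gradf (x + t • d) - gradf x) d : ℂ).re := by
      rw [inner_sub_left, Complex.sub_re, hc]
    rw [hb]
    have h1 : (inner ℂ (gradf (x + t • d) - gradf x) d : ℂ).re
        ≤ ‖gradf (x + t • d) - gradf x‖ * ‖d‖ := by
      calc (inner ℂ (gradf (x + t • d) - gradf x) d : ℂ).re
          ≤ ‖(inner ℂ (gradf (x + t • d) - gradf x) d : ℂ)‖ := Complex.re_le_norm _
        _ ≤ _ := norm_inner_le_norm _ _
    have h2 : ‖gradf (x + t • d) - gradf x‖ ≤ L * (t * ‖d‖) := by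
      have := hlip (x + t • d) x
      simpa [norm_smul, abs_of_pos ht.1] using this
    have h3 : ‖gradf (x + t • d) - gradf x‖ * ‖d‖ ≤ L * (t * ‖d‖) * ‖d‖ :=
      mul_le_mul_of_nonneg_right h2 (norm_nonneg _)
    have : L * (t * ‖d‖) * ‖d‖ = L * t * q := by rw [hq]; ring
    linarith [h1.trans h3, this.le, this.ge]
  have hanti : AntitoneOn φ (Set.Icc (0:ℝ) 1) := by
    apply antitoneOn_of_deriv_nonpos (convex_Icc 0 1)
    · intro t ht
      exact ((hφ t).continuousAt).continuousWithinAt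
    · intro t ht
      exact ((hφ t).differentiableAt).differentiableWithinAt
    · exact hder
  have h01 := hanti (Set.mem_Icc.mpr ⟨le_refl 0, zero_le_one⟩)
      (Set.mem_Icc.mpr ⟨zero_le_one, le_refl 1⟩) zero_le_one
  simp only [hφdef] at h01
  rw [zero_smul, one_smul, add_zero] at h01
  have hxy : x + d = y := by rw [hd]; abel
  rw [hxy] at h01
  nlinarith [h01]

theorem wnorm2_smul' {N : ℕ} (W : Matrix (Fin N) (Fin N) ℂ) (r : ℝ) (z : EC N) :
    wnorm2 W (r • z) = r ^ 2 * wnorm2 W z := by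
  unfold wnorm2
  have h1 : (fun i => starRingEnd ℂ ((r • z) i)) =
      (r : ℂ) • (fun i => starRingEnd ℂ (z i)) := by
    funext i
    simp [PiLp.smul_apply, Complex.real_smul, map_mul, Complex.conj_ofReal]
  have h2 : (fun i => (r • z) i) = (r : ℂ) • (fun i => z i) := by
    funext i
    simp [PiLp.smul_apply, Complex.real_smul]
  rw [h1, h2, Matrix.mulVec_smul, smul_dotProduct, dotProduct_smul,
    smul_eq_mul, smul_eq_mul, ← mul_assoc, ← Complex.ofReal_mul, Complex.re_ofReal_mul]
  ring

theorem inner_real_smul_re' {N : ℕ} (g w : EC N) (r : ℝ) :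
    (inner ℂ g (r • w) : ℂ).re = r * (inner ℂ g w : ℂ).re := by
  rw [← algebraMap_smul ℂ r w, inner_smul_right]
  simp [Complex.re_ofReal_mul]

theorem Sh_min_le' {N : ℕ} (h : EC N → ℝ) (hconv : ConvexOn ℝ Set.univ h)
    (W : Matrix (Fin N) (Fin N) ℂ) (α : ℝ) (hα : 0 < α) (g : EC N)
    (C : Set (EC N)) (hCcv : Convex ℝ C) (u v : EC N) (hu : u ∈ C) (hv : v ∈ C)
    (hQ : 0 ≤ wnorm2 W (u - v))
    (hmin : IsMinOn (fun xb => Sh h W α g v xb) C u) :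
    Sh h W α g v u ≤ -((1 / (2 * α)) * wnorm2 W (u - v)) := by
  set Q : ℝ := wnorm2 W (u - v) with hQdef
  set b : ℝ := (1 / (2 * α)) * Q with hbdef
  have hb : 0 ≤ b := by
    apply mul_nonneg _ hQ
    positivity
  set a : ℝ := (inner ℂ g (u - v) : ℂ).re + h u - h v with hadef
  have hShu : Sh h W α g v u = a + b := by
    unfold Sh; rw [hadef, hbdef, hQdef]; ring
  have hkey : ∀ t : ℝ, t ∈ Set.Ioo (0:ℝ) 1 → a ≤ (t - 2) * b := by
    intro t ht
    set p : EC N := (1 - t) • u + t • v with hpdef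
    have hpC : p ∈ C := hCcv hu hv (by linarith [ht.2]) (le_of_lt ht.1) (by ring)
    have hple := hmin hpC
    have hpv : p - v = (1 - t) • (u - v) := by rw [hpdef]; module
    have hSp : Sh h W α g v p ≤ (1 - t) * a + (1 - t) ^ 2 * b := by
      unfold Sh
      rw [hpv, inner_real_smul_re', wnorm2_smul']
      have hh : h p ≤ (1 - t) * h u + t * h v :=
        hconv.2 (Set.mem_univ u) (Set.mem_univ v) (by linarith [ht.2])
          (le_of_lt ht.1) (by ring)
      rw [hadef, hbdef, hQdef]
      nlinarith [hh]
    have hchain : a + b ≤ (1 - t) * a + (1 - t) ^ 2 * b := by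
      rw [← hShu]; exact le_trans hple hSp
    nlinarith [hchain, ht.1, mul_pos ht.1 ht.1]
  have ha2b : a ≤ -2 * b := by
    apply le_of_forall_pos_le_add
    intro ε hε
    set t : ℝ := min (1/2) (ε / (b + 1)) with htdef
    have ht0 : 0 < t := lt_min (by norm_num) (div_pos hε (by linarith))
    have ht1 : t < 1 := lt_of_le_of_lt (min_le_left _ _) (by norm_num)
    have := hkey t ⟨ht0, ht1⟩
    have htb : t * b ≤ ε := by
      have h1 : t ≤ ε / (b + 1) := min_le_right _ _
      have h2 : t * b ≤ (ε / (b + 1)) * b := mul_le_mul_of_nonneg_right h1 hb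
      have h3 : (ε / (b + 1)) * b ≤ ε := by
        rw [div_mul_eq_mul_div, div_le_iff₀ (by linarith)]
        nlinarith
      linarith
    nlinarith
  rw [hShu]
  linarith


/-- Sublinear rate for the minimal step length. Let `f` be
real-differentiable with `L`-Lipschitz gradient, `h` convex differentiable,
`F = h + f`, `C` nonempty closed convex with finite infimum `F*` of `F` over
`C`. Suppose the sequence `x₁, x₂, …` in `C` is generated with Hermitian
`B_k ⪰ η·I` (`η > 0`), stepsizes `0 < α_k ≤ η/L`, and `x_{k+1}` a minimizer
over `C` of `x̄ ↦ S_h(x̄, x_k, ∇f(x_k), B_k, α_k)`. Then for every `K ≥ 1`,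
`min_{1 ≤ k ≤ K} ‖x_{k+1} − x_k‖² ≤ 2(F(x₁) − F*)/(L·K)`. -/
theorem stmt14 {N : ℕ} (f : EC N → ℝ) (gradf : EC N → EC N) (L : ℝ) (hL : 0 < L)
    (hfdiff : ∀ z : EC N, HasFDerivAt f (gradDual (gradf z)) z)
    (hlip : ∀ z₁ z₂ : EC N, ‖gradf z₁ - gradf z₂‖ ≤ L * ‖z₁ - z₂‖)
    (h : EC N → ℝ) (hconv : ConvexOn ℝ Set.univ h) (hdiff : Differentiable ℝ h)
    (F : EC N → ℝ) (hF : F = fun z => h z + f z)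
    (C : Set (EC N)) (hCne : C.Nonempty) (hCcl : IsClosed C) (hCcv : Convex ℝ C)
    (Fstar : ℝ) (hFstar : IsGLB (F '' C) Fstar)
    (η : ℝ) (hη : 0 < η)
    (x : ℕ → EC N) (B : ℕ → Matrix (Fin N) (Fin N) ℂ) (α : ℕ → ℝ)
    (hxC : ∀ k, 1 ≤ k → x k ∈ C)
    (hBH : ∀ k, 1 ≤ k → (B k).IsHermitian)
    (hBlb : ∀ k, 1 ≤ k → (B k - η • (1 : Matrix (Fin N) (Fin N) ℂ)).PosSemidef)
    (hαpos : ∀ k, 1 ≤ k → 0 < α k) (hαle : ∀ k, 1 ≤ k → α k ≤ η / L)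
    (hupd : ∀ k, 1 ≤ k →
      IsMinOn (fun xb => Sh h (B k) (α k) (gradf (x k)) (x k) xb) C (x (k + 1))) :
    ∀ K : ℕ, 1 ≤ K → ∃ k, 1 ≤ k ∧ k ≤ K ∧
      ‖x (k + 1) - x k‖ ^ 2 ≤ 2 * (F (x 1) - Fstar) / (L * K) := by
  -- per-step decrease
  have step : ∀ k : ℕ, 1 ≤ k →
      F (x (k + 1)) + L / 2 * ‖x (k + 1) - x k‖ ^ 2 ≤ F (x k) := by
    intro k hk
    set v := x k
    set u := x (k + 1)
    set d := u - v with hddef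
    set Q := wnorm2 (B k) d with hQdef
    have hQlb : η * ‖d‖ ^ 2 ≤ Q := wnorm2_lb' (B k) η (hBlb k hk) d
    have hQ0 : 0 ≤ Q := le_trans (by positivity) hQlb
    have hSh := Sh_min_le' h hconv (B k) (α k) (hαpos k hk) (gradf v) C hCcv
      u v (hxC (k + 1) (by omega)) (hxC k hk) hQ0 (hupd k hk)
    have hdesc := descent' f gradf L hfdiff hlip v u
    have hα := hαpos k hk
    have hαle' := hαle k hk
    have hhalf : L / 2 * ‖d‖ ^ 2 ≤ (1 / (2 * α k)) * Q := by
      have hαL : α k * L ≤ η := by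
        rw [le_div_iff₀ hL] at hαle'; exact hαle'
      have h1 : α k * L * ‖d‖ ^ 2 ≤ Q := by
        nlinarith [hQlb, sq_nonneg ‖d‖]
      have hpos : (0:ℝ) < 1 / (2 * α k) := by positivity
      have h2 := mul_le_mul_of_nonneg_left h1 hpos.le
      have h3 : 1 / (2 * α k) * (α k * L * ‖d‖ ^ 2) = L / 2 * ‖d‖ ^ 2 := by
        field_simp
      linarith
    have hShu : Sh h (B k) (α k) (gradf v) v u
        = (inner ℂ (gradf v) d : ℂ).re + (1 / (2 * α k)) * Q + h u - h v := rfl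
    rw [hShu] at hSh
    rw [hF]
    simp only
    linarith [hdesc, hSh, hhalf]
  -- telescoping
  have tele : ∀ K : ℕ, F (x (K + 1)) +
      ∑ k ∈ Finset.Icc 1 K, L / 2 * ‖x (k + 1) - x k‖ ^ 2 ≤ F (x 1) := by
    intro K
    induction K with
    | zero => simp
    | succ K ih =>
      rw [Finset.sum_Icc_succ_top (by omega : 1 ≤ K + 1)]
      have := step (K + 1) (by omega)
      linarith
  intro K hK
  obtain ⟨k, hkmem, hkmin⟩ := Finset.exists_min_image (Finset.Icc 1 K)
    (fun k => ‖x (k + 1) - x k‖ ^ 2) ⟨1, Finset.mem_Icc.mpr ⟨le_refl 1, hK⟩⟩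
  rw [Finset.mem_Icc] at hkmem
  refine ⟨k, hkmem.1, hkmem.2, ?_⟩
  set m := ‖x (k + 1) - x k‖ ^ 2 with hm
  have hsum : (K : ℝ) * (L / 2 * m) ≤
      ∑ j ∈ Finset.Icc 1 K, L / 2 * ‖x (j + 1) - x j‖ ^ 2 := by
    have hcard : (Finset.Icc 1 K).card = K := by
      rw [Nat.card_Icc]; omega
    have := Finset.card_nsmul_le_sum (Finset.Icc 1 K)
      (fun j => L / 2 * ‖x (j + 1) - x j‖ ^ 2) (L / 2 * m)
      (fun j hj => by
        have := hkmin j hj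
        have hL2 : (0:ℝ) ≤ L / 2 := by linarith
        exact mul_le_mul_of_nonneg_left this hL2)
    rw [hcard, nsmul_eq_mul] at this
    exact this
  have hFstarle : Fstar ≤ F (x (K + 1)) :=
    hFstar.1 ⟨x (K + 1), hxC (K + 1) (by omega), rfl⟩
  have hKpos : (0:ℝ) < K := by exact_mod_cast Nat.pos_of_ne_zero (by omega)
  rw [le_div_iff₀ (by positivity : (0:ℝ) < L * K)]
  have hid : (K:ℝ) * (L / 2 * m) = m * (L * K) / 2 := by ring
  have htK := tele K
  linarith
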